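/- There exists a decomposition of the edge set of the complete bipartite-complement graph K_{6,6} (the complete bipartite graph with parts A = {1,...,6} and B = {a,...,f}) into 5 parallel classes: 2 perfect matchings and 3 classes each consisting of 4 vertex-disjoint paths P_3 covering all 12 vertices. -/

import Mathlib

/-- The edges of a path given by the list of its vertices in order. -/
def pathEdges {V : Type*} [DecidableEq V] (l : List V) : Finset (Sym2 V) :=
  ((l.zip l.tail).map (fun p : V × V => Sym2.mk p.1 p.2)).toFinset

/-- A parallel class of paths on `k` vertices in a graph `G`: a set of lists, each
a path on `k` vertices of `G`, which are vertex-disjoint and cover every vertex. -/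
def IsPathClass {V : Type*} (G : SimpleGraph V) (k : ℕ) (C : Finset (List V)) : Prop :=
  (∀ l ∈ C, l.length = k ∧ l.Nodup ∧ l.Chain' G.Adj) ∧
  ∀ x : V, ∃! l : List V, l ∈ C ∧ x ∈ l

/-- All edges used by a class of paths. -/
def classEdges {V : Type*} [DecidableEq V] (C : Finset (List V)) : Finset (Sym2 V) :=
  C.biUnion pathEdges

/-- A uniformly resolvable `(P₂,P₃,P₄)`-decomposition of `G` into `r` perfect matchings
(parallel classes of `P₂`), `s` parallel classes of `P₃` and `t` parallel classes of `P₄`: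
pairwise edge-disjoint classes whose edges together are exactly the edges of `G`. -/
def IsURD {V : Type*} [DecidableEq V] (G : SimpleGraph V) (r s t : ℕ) : Prop :=
  ∃ F : Fin r ⊕ Fin s ⊕ Fin t → Finset (List V),
    (∀ i, IsPathClass G (Sum.elim (fun _ => 2) (Sum.elim (fun _ => 3) (fun _ => 4)) i) (F i)) ∧
    (∀ i j, i ≠ j → Disjoint (classEdges (F i)) (classEdges (F j))) ∧
    (∀ e, e ∈ G.edgeSet ↔ ∃ i, e ∈ classEdges (F i))

/-- The complete bipartite graph `K_{6,6}`: vertices `(side, i)` with `side : Fin 2`,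
adjacent iff on different sides. -/
def K66 : SimpleGraph (Fin 2 × Fin 6) := SimpleGraph.comap Prod.fst ⊤


instance (priority := 2000) chainDec {α : Type*} (R : α → α → Prop) [DecidableRel R] (a : α) :
    ∀ l : List α, Decidable (List.Chain R a l)
  | [] => isTrue List.Chain.nil
  | b :: l =>
    haveI : Decidable (List.Chain R b l) := chainDec R b l
    decidable_of_iff (R a b ∧ List.Chain R b l) List.chain_cons.symm

instance (priority := 2000) chain'Dec {α : Type*} (R : α → α → Prop) [DecidableRel R] :
    ∀ l : List α, Decidable (List.Chain' R l)
  | [] => isTrue List.IsChain.nil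
  | _ :: _ => inferInstanceAs (Decidable (List.Chain R _ _))

instance K66.adjDec : DecidableRel K66.Adj :=
  fun a b => inferInstanceAs (Decidable (a.1 ≠ b.1))

def M1cls : Finset (List (Fin 2 × Fin 6)) := {[(0,0), (1,4)], [(0,1), (1,5)], [(0,2), (1,2)], [(0,3), (1,3)], [(0,4), (1,1)], [(0,5), (1,0)]}
def M2cls : Finset (List (Fin 2 × Fin 6)) := {[(0,0), (1,3)], [(0,1), (1,1)], [(0,2), (1,0)], [(0,3), (1,4)], [(0,4), (1,5)], [(0,5), (1,2)]}
def C1cls : Finset (List (Fin 2 × Fin 6)) := {[(1,0), (0,0), (1,1)], [(1,5), (0,3), (1,2)], [(0,2), (1,3), (0,4)], [(0,1), (1,4), (0,5)]}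
def C2cls : Finset (List (Fin 2 × Fin 6)) := {[(1,2), (0,1), (1,3)], [(1,0), (0,4), (1,4)], [(0,2), (1,1), (0,3)], [(0,0), (1,5), (0,5)]}
def C3cls : Finset (List (Fin 2 × Fin 6)) := {[(1,4), (0,2), (1,5)], [(1,1), (0,5), (1,3)], [(0,1), (1,0), (0,3)], [(0,0), (1,2), (0,4)]}

def Fdef : Fin 2 ⊕ Fin 3 ⊕ Fin 0 → Finset (List (Fin 2 × Fin 6)) :=
  Sum.elim (![M1cls, M2cls]) (Sum.elim (![C1cls, C2cls, C3cls]) (fun i => i.elim0))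

lemma existsUnique_of_filter_card {V : Type*} [DecidableEq V] (C : Finset (List V)) (x : V)
    (h : (C.filter (fun l => x ∈ l)).card = 1) : ∃! l : List V, l ∈ C ∧ x ∈ l := by
  obtain ⟨a, ha⟩ := Finset.card_eq_one.mp h
  have haf : a ∈ C.filter (fun l => x ∈ l) := ha ▸ Finset.mem_singleton_self a
  rw [Finset.mem_filter] at haf
  refine ⟨a, haf, fun y hy => ?_⟩
  have : y ∈ C.filter (fun l => x ∈ l) := Finset.mem_filter.mpr hy
  rw [ha, Finset.mem_singleton] at this
  exact this

lemma pathclass {V : Type*} [DecidableEq V] {G : SimpleGraph V} (C : Finset (List V)) (k : ℕ)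
    (h1 : ∀ l ∈ C, l.length = k ∧ l.Nodup ∧ l.Chain' G.Adj)
    (h2 : ∀ x : V, (C.filter (fun l => x ∈ l)).card = 1) :
    IsPathClass G k C :=
  ⟨h1, fun x => existsUnique_of_filter_card C x (h2 x)⟩

/-- `K_{6,6}` admits a uniformly resolvable decomposition into 5 parallel classes:
2 perfect matchings and 3 classes each consisting of 4 vertex-disjoint `P₃`'s
covering all 12 vertices. -/
theorem stmt10 : IsURD K66 2 3 0 := by
  refine ⟨Fdef, fun i => ?_, by decide, fun e => ?_⟩
  · rcases i with i | i | i
    · fin_cases i <;> exact pathclass _ _ (by decide) (by decide)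
    · fin_cases i <;> exact pathclass _ _ (by decide) (by decide)
    · exact i.elim0
  · rw [← SimpleGraph.mem_edgeFinset]
    revert e
    decide
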